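/- arXiv:1208.0374 — 7 statements merged into one kernel-verified Lean document; each statement's English description precedes it below -/
import Mathlib

section
/- For each real number r > 0 and every finite coloring χ : ℝ² → Fin k of the Euclidean plane, the set of monochromatic rectangles whose side lengths are positive integer multiples of r is uncountable; that is, the set of quadruples (x, y, m, n) ∈ ℝ × ℝ × ℤ⁺ × ℤ⁺ such that the four points (x, y), (x + m·r, y), (x, y + n·r), (x + m·r, y + n·r) all receive the same color under χ is uncountable. -/
lemma exists_mono_rect (r : ℝ) (k : ℕ) (hk : 0 < k) (χ : ℝ × ℝ → Fin k) (x : ℝ) :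
    ∃ q : ℝ × ℝ × ℤ × ℤ,
      (0 < q.2.2.1 ∧ 0 < q.2.2.2 ∧
        χ (q.1 + (q.2.2.1 : ℝ) * r, q.2.1) = χ (q.1, q.2.1) ∧
        χ (q.1, q.2.1 + (q.2.2.2 : ℝ) * r) = χ (q.1, q.2.1) ∧
        χ (q.1 + (q.2.2.1 : ℝ) * r, q.2.1 + (q.2.2.2 : ℝ) * r) = χ (q.1, q.2.1)) ∧
      ∃ m : ℕ, m ≤ k ^ (k + 1) ∧ q.1 = x + m * r := by
  have main : ∀ u v : ℕ, u < v → v ≤ k ^ (k + 1) →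
      (∀ i : Fin (k + 1), χ (x + (u : ℝ) * r, ((i : ℕ) : ℝ) * r)
        = χ (x + (v : ℝ) * r, ((i : ℕ) : ℝ) * r)) →
      ∃ q : ℝ × ℝ × ℤ × ℤ,
      (0 < q.2.2.1 ∧ 0 < q.2.2.2 ∧
        χ (q.1 + (q.2.2.1 : ℝ) * r, q.2.1) = χ (q.1, q.2.1) ∧
        χ (q.1, q.2.1 + (q.2.2.2 : ℝ) * r) = χ (q.1, q.2.1) ∧
        χ (q.1 + (q.2.2.1 : ℝ) * r, q.2.1 + (q.2.2.2 : ℝ) * r) = χ (q.1, q.2.1)) ∧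
      ∃ m : ℕ, m ≤ k ^ (k + 1) ∧ q.1 = x + m * r := by
    intro u v huv hv hcol
    have main2 : ∀ a b : Fin (k + 1), (a : ℕ) < (b : ℕ) →
        χ (x + (u : ℝ) * r, ((a : ℕ) : ℝ) * r) = χ (x + (u : ℝ) * r, ((b : ℕ) : ℝ) * r) →
        ∃ q : ℝ × ℝ × ℤ × ℤ,
        (0 < q.2.2.1 ∧ 0 < q.2.2.2 ∧
          χ (q.1 + (q.2.2.1 : ℝ) * r, q.2.1) = χ (q.1, q.2.1) ∧
          χ (q.1, q.2.1 + (q.2.2.2 : ℝ) * r) = χ (q.1, q.2.1) ∧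
          χ (q.1 + (q.2.2.1 : ℝ) * r, q.2.1 + (q.2.2.2 : ℝ) * r) = χ (q.1, q.2.1)) ∧
        ∃ m : ℕ, m ≤ k ^ (k + 1) ∧ q.1 = x + m * r := by
      intro a b hab heq
      have h1 : x + (u : ℝ) * r + ((((v : ℤ) - (u : ℤ)) : ℤ) : ℝ) * r = x + (v : ℝ) * r := by
        push_cast; ring
      have h2 : ((a : ℕ) : ℝ) * r + (((((b : ℕ) : ℤ) - ((a : ℕ) : ℤ)) : ℤ) : ℝ) * r
          = ((b : ℕ) : ℝ) * r := by push_cast; ring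
      refine ⟨(x + (u : ℝ) * r, ((a : ℕ) : ℝ) * r, (v : ℤ) - (u : ℤ),
        ((b : ℕ) : ℤ) - ((a : ℕ) : ℤ)), ⟨?_, ?_, ?_, ?_, ?_⟩, u, le_of_lt (lt_of_lt_of_le huv hv), rfl⟩
      · simp only [sub_pos]; exact_mod_cast huv
      · simp only [sub_pos]; exact_mod_cast hab
      · dsimp only; rw [h1]; exact (hcol a).symm
      · dsimp only; rw [h2]; exact heq.symm
      · dsimp only; rw [h1, h2]; exact (hcol b).symm.trans heq.symm
    obtain ⟨a, b, hab, hfeq⟩ := Fintype.exists_ne_map_eq_of_card_lt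
      (fun i : Fin (k + 1) => χ (x + (u : ℝ) * r, ((i : ℕ) : ℝ) * r)) (by simp)
    rcases hab.lt_or_gt with h | h
    · exact main2 a b h hfeq
    · exact main2 b a h hfeq.symm
  obtain ⟨m, m', hne, hg⟩ := Fintype.exists_ne_map_eq_of_card_lt
    (fun m : Fin (k ^ (k + 1) + 1) => fun i : Fin (k + 1) =>
      χ (x + ((m : ℕ) : ℝ) * r, ((i : ℕ) : ℝ) * r))
    (by simpa [Fintype.card_fun] using Nat.lt_succ_self (k ^ (k + 1)))
  have hg' := funext_iff.mp hg
  rcases hne.lt_or_gt with h | h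
  · exact main (m : ℕ) (m' : ℕ) h (Nat.lt_succ_iff.mp m'.isLt) (fun i => hg' i)
  · exact main (m' : ℕ) (m : ℕ) h (Nat.lt_succ_iff.mp m.isLt) (fun i => (hg' i).symm)

/-- For each `r > 0` and every finite coloring of the plane, the set of
monochromatic rectangles whose side lengths are positive integer multiples of
`r` is uncountable. -/
theorem uncountably_many_monochromatic_rectangles_int_multiples
    (r : ℝ) (hr : 0 < r) (k : ℕ) (χ : ℝ × ℝ → Fin k) :
    ¬ Set.Countable {q : ℝ × ℝ × ℤ × ℤ |
      0 < q.2.2.1 ∧ 0 < q.2.2.2 ∧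
      χ (q.1 + (q.2.2.1 : ℝ) * r, q.2.1) = χ (q.1, q.2.1) ∧
      χ (q.1, q.2.1 + (q.2.2.2 : ℝ) * r) = χ (q.1, q.2.1) ∧
      χ (q.1 + (q.2.2.1 : ℝ) * r, q.2.1 + (q.2.2.2 : ℝ) * r) = χ (q.1, q.2.1)} := by
  intro hS
  rcases Nat.eq_zero_or_pos k with hk | hk
  · subst hk; exact (χ (0, 0)).elim0
  set S := {q : ℝ × ℝ × ℤ × ℤ |
      0 < q.2.2.1 ∧ 0 < q.2.2.2 ∧
      χ (q.1 + (q.2.2.1 : ℝ) * r, q.2.1) = χ (q.1, q.2.1) ∧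
      χ (q.1, q.2.1 + (q.2.2.2 : ℝ) * r) = χ (q.1, q.2.1) ∧
      χ (q.1 + (q.2.2.1 : ℝ) * r, q.2.1 + (q.2.2.2 : ℝ) * r) = χ (q.1, q.2.1)} with hSdef
  have hC : (Prod.fst '' S).Countable := hS.image _
  have : Countable (Prod.fst '' S) := hC.to_subtype
  have huniv : (Set.univ : Set ℝ).Countable := by
    have hrange : (Set.range (fun p : (Prod.fst '' S) × ℕ => (p.1 : ℝ) - (p.2 : ℝ) * r)).Countable :=
      Set.countable_range _
    refine hrange.mono ?_
    intro x _
    obtain ⟨q, hq, m, _, hq1⟩ := exists_mono_rect r k hk χ x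
    exact ⟨(⟨q.1, ⟨q, hq, rfl⟩⟩, m), by simp [hq1]⟩
  exact Cardinal.not_countable_real huniv
end

section
/- For any finite coloring χ : ℤ × ℤ → Fin k of the integer lattice, there exists a monochromatic square: there exist integers x, y and a positive integer d such that the four points (x, y), (x + d, y), (x, y + d), (x + d, y + d) all receive the same color. -/
/-- Any finite coloring of the integer lattice contains a monochromatic square
(sides parallel to the axes, positive side length). -/
theorem monochromatic_square_int_lattice (k : ℕ) (χ : ℤ × ℤ → Fin k) :
    ∃ (x y d : ℤ), 0 < d ∧
      χ (x + d, y) = χ (x, y) ∧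
      χ (x, y + d) = χ (x, y) ∧
      χ (x + d, y + d) = χ (x, y) := by
  obtain ⟨a, ha, ⟨bx, bz⟩, c, hc⟩ :=
    Combinatorics.exists_mono_homothetic_copy
      ({(0,0), (1,0), (0,1), (1,1)} : Finset (ℤ × ℤ)) χ
  have h00 := hc (0,0) (by simp)
  have h10 := hc (1,0) (by simp)
  have h01 := hc (0,1) (by simp)
  have h11 := hc (1,1) (by simp)
  simp only [Prod.smul_mk, smul_zero, nsmul_eq_mul, mul_one, Prod.mk_add_mk,
    zero_add] at h00 h10 h01 h11
  refine ⟨bx, bz, (a : ℤ), by exact_mod_cast ha, ?_, ?_, ?_⟩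
  · rw [show bx + (a:ℤ) = (a:ℤ) + bx from add_comm _ _, h10, h00]
  · rw [show bz + (a:ℤ) = (a:ℤ) + bz from add_comm _ _, h01, h00]
  · rw [show bx + (a:ℤ) = (a:ℤ) + bx from add_comm _ _,
      show bz + (a:ℤ) = (a:ℤ) + bz from add_comm _ _, h11, h00]
end

section
/- For each real number r > 0 and every finite coloring χ : ℝ² → Fin k of the Euclidean plane, there exist uncountably many monochromatic rectangles with aspect ratio r; that is, the set of triples (x, y, d) ∈ ℝ × ℝ × ℝ with d > 0 such that the four points (x, y), (x + r·d, y), (x, y + d), (x + r·d, y + d) all receive the same color under χ is uncountable. -/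
/-- For each `r > 0` and every finite coloring of the plane, there are
uncountably many monochromatic rectangles with aspect ratio `r`. -/
theorem uncountably_many_monochromatic_rectangles_aspect_ratio
    (r : ℝ) (hr : 0 < r) (k : ℕ) (χ : ℝ × ℝ → Fin k) :
    ¬ Set.Countable {p : ℝ × ℝ × ℝ |
      0 < p.2.2 ∧
      χ (p.1 + r * p.2.2, p.2.1) = χ (p.1, p.2.1) ∧
      χ (p.1, p.2.1 + p.2.2) = χ (p.1, p.2.1) ∧
      χ (p.1 + r * p.2.2, p.2.1 + p.2.2) = χ (p.1, p.2.1)} := by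
  intro hc
  set R : Set (ℝ × ℝ × ℝ) := {p : ℝ × ℝ × ℝ |
      0 < p.2.2 ∧
      χ (p.1 + r * p.2.2, p.2.1) = χ (p.1, p.2.1) ∧
      χ (p.1, p.2.1 + p.2.2) = χ (p.1, p.2.1) ∧
      χ (p.1 + r * p.2.2, p.2.1 + p.2.2) = χ (p.1, p.2.1)} with hR
  have hD : Set.Countable ((fun p : ℝ × ℝ × ℝ => p.2.2) '' R) := hc.image _
  set D := (fun p : ℝ × ℝ × ℝ => p.2.2) '' R with hDdef
  have key : ∀ t : ℝ, 0 < t → ∃ a : ℕ, 0 < a ∧ (a : ℝ) * t ∈ D := by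
    intro t ht
    obtain ⟨a, ha, b, c, hmono⟩ :=
      Combinatorics.exists_mono_homothetic_copy
        ({((0:ℝ),(0:ℝ)), (r*t, 0), (0, t), (r*t, t)} : Finset (ℝ × ℝ)) χ
    refine ⟨a, ha, ?_⟩
    have h1 := hmono ((0:ℝ),(0:ℝ)) (by simp)
    have h2 := hmono (r*t, 0) (by simp)
    have h3 := hmono ((0:ℝ), t) (by simp)
    have h4 := hmono (r*t, t) (by simp)
    have hsmul : ∀ (x y : ℝ), a • ((x, y) : ℝ × ℝ) + b = (a * x + b.1, a * y + b.2) := by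
      intro x y
      simp [Prod.ext_iff, nsmul_eq_mul]
    rw [hsmul] at h1 h2 h3 h4
    refine ⟨(b.1, b.2, (a:ℝ) * t), ?_, rfl⟩
    have hb1 : b.1 + r * ((a:ℝ) * t) = (a:ℝ) * (r * t) + b.1 := by ring
    have hb2 : b.2 + (a:ℝ) * t = (a:ℝ) * t + b.2 := by ring
    norm_num at h1 h2 h3
    constructor
    · positivity
    refine ⟨?_, ?_, ?_⟩ <;> simp only [hb1, hb2]
    · exact h2.trans h1.symm
    · exact h3.trans h1.symm
    · exact h4.trans h1.symm
  have hsub : Set.Ioi (0:ℝ) ⊆ ⋃ a : ℕ, (fun d => d / (a:ℝ)) '' D := by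
    intro t ht
    obtain ⟨a, ha, hmem⟩ := key t ht
    refine Set.mem_iUnion.2 ⟨a, ⟨(a:ℝ) * t, hmem, ?_⟩⟩
    have ha' : (a:ℝ) ≠ 0 := Nat.cast_ne_zero.2 ha.ne'
    show (a:ℝ) * t / (a:ℝ) = t
    rw [mul_comm, mul_div_assoc, div_self ha', mul_one]
  have hIoi : (Set.Ioi (0:ℝ)).Countable :=
    (Set.countable_iUnion fun a => hD.image _).mono hsub
  have : (Set.univ : Set ℝ).Countable := by
    have hinj : Function.Injective Real.exp := Real.exp_injective
    have : (Real.exp ⁻¹' Set.Ioi 0).Countable := hIoi.preimage hinj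
    have heq : Real.exp ⁻¹' Set.Ioi 0 = Set.univ := by
      ext x; simp [Real.exp_pos]
    rwa [heq] at this
  exact Cardinal.not_countable_real this
end

section
/- Let 0 < r < 1. For every 2-coloring χ : [0,1] × [0,1] → Fin 2 of the closed unit square, there exist uncountably many monochromatic rectangles with aspect ratio r contained in the unit square; that is, the set of triples (x, y, d) with d > 0 such that the four points (x, y), (x + r·d, y), (x, y + d), (x + r·d, y + d) all lie in [0,1] × [0,1] and all receive the same color under χ is uncountable. -/
open Finset in
/-- Bounded Gallai-type lemma from Hales–Jewett: there is a universal dimension `D`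
such that for every scale `δ` there is a monochromatic rectangle of aspect ratio `r`
(side `m*δ`, `1 ≤ m ≤ D`) inside the box `[0, D*(r*δ)] × [0, D*δ]`. -/
lemma gallai_bounded_rect (r : ℝ) (hr : 0 ≤ r) (f : ℝ × ℝ → Fin 2) :
    ∃ D : ℕ, 0 < D ∧ ∀ δ : ℝ, 0 ≤ δ →
      ∃ (x y : ℝ) (m : ℕ), 1 ≤ m ∧ m ≤ D ∧
        0 ≤ x ∧ 0 ≤ y ∧ x + r * ((m : ℝ) * δ) ≤ (D : ℝ) * (r * δ) ∧
        (y + (m : ℝ) * δ ≤ (D : ℝ) * δ) ∧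
        f (x + r * ((m : ℝ) * δ), y) = f (x, y) ∧
        f (x, y + (m : ℝ) * δ) = f (x, y) ∧
        f (x + r * ((m : ℝ) * δ), y + (m : ℝ) * δ) = f (x, y) := by
  obtain ⟨ι, hfin, hι⟩ := Combinatorics.Line.exists_mono_in_high_dimension (Fin 4) (Fin 2)
  classical
  refine ⟨Fintype.card ι, ?_, ?_⟩
  · -- ι is nonempty since a line exists
    obtain ⟨l, _⟩ := hι fun _ => 0
    obtain ⟨i, _⟩ := l.proper
    exact Fintype.card_pos_iff.mpr ⟨i⟩
  intro δ hδ
  have hrδ : 0 ≤ r * δ := mul_nonneg hr hδ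
  set s : Fin 4 → ℝ × ℝ := ![(0, 0), (r * δ, 0), (0, δ), (r * δ, δ)] with hs
  obtain ⟨l, c, hl⟩ := hι fun v => f (∑ i, s (v i))
  have hs1 : ∀ k : Fin 4, (s k).1 ≤ r * δ := fun k => by fin_cases k <;> simp [hs, hrδ]
  have hs1' : ∀ k : Fin 4, 0 ≤ (s k).1 := fun k => by fin_cases k <;> simp [hs, hrδ]
  have hs2 : ∀ k : Fin 4, (s k).2 ≤ δ := fun k => by fin_cases k <;> simp [hs, hδ]
  have hs2' : ∀ k : Fin 4, 0 ≤ (s k).2 := fun k => by fin_cases k <;> simp [hs, hδ]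
  set t : Finset ι := Finset.univ.filter (fun i => l.idxFun i = none) with ht
  set m : ℕ := t.card with hm
  set b : ℝ × ℝ := ∑ i ∈ tᶜ, s (l 0 i) with hb
  have key : ∀ a : Fin 4, (∑ i, s (l a i)) = m • s a + b := by
    intro a
    rw [← Finset.sum_add_sum_compl t]
    congr 1
    · rw [← Finset.sum_const]
      refine Finset.sum_congr rfl fun i hi => ?_
      rw [ht, Finset.mem_filter] at hi
      rw [l.apply_none _ _ hi.2]
    · refine Finset.sum_congr rfl fun i hi => ?_
      rw [ht, Finset.compl_filter, Finset.mem_filter] at hi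
      obtain ⟨y, hy⟩ := Option.ne_none_iff_exists'.mp hi.2
      rw [l.apply_some hy, l.apply_some hy]
  -- bounds on coordinates of any grid point
  have bound1 : ∀ a : Fin 4, (∑ i, s (l a i)).1 ≤ (Fintype.card ι : ℝ) * (r * δ) := by
    intro a
    rw [Prod.fst_sum]
    calc ∑ i, (s (l a i)).1 ≤ ∑ _i : ι, (r * δ) :=
          Finset.sum_le_sum fun i _ => hs1 _
      _ = (Fintype.card ι : ℝ) * (r * δ) := by
          simp [Finset.sum_const, nsmul_eq_mul, Finset.card_univ]
  have bound2 : ∀ a : Fin 4, (∑ i, s (l a i)).2 ≤ (Fintype.card ι : ℝ) * δ := by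
    intro a
    rw [Prod.snd_sum]
    calc ∑ i, (s (l a i)).2 ≤ ∑ _i : ι, δ :=
          Finset.sum_le_sum fun i _ => hs2 _
      _ = (Fintype.card ι : ℝ) * δ := by
          simp [Finset.sum_const, nsmul_eq_mul, Finset.card_univ]
  have hb1 : 0 ≤ b.1 := by
    rw [hb, Prod.fst_sum]
    exact Finset.sum_nonneg fun i _ => hs1' _
  have hb2 : 0 ≤ b.2 := by
    rw [hb, Prod.snd_sum]
    exact Finset.sum_nonneg fun i _ => hs2' _
  have hm1 : 1 ≤ m := by
    obtain ⟨i, hi⟩ := l.proper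
    refine Finset.card_pos.mpr ⟨i, ?_⟩
    rw [ht, Finset.mem_filter]
    exact ⟨Finset.mem_univ _, hi⟩
  have hmD : m ≤ Fintype.card ι := Finset.card_le_univ t
  have e0 : m • s 0 + b = (b.1, b.2) := by simp [hs]
  have e1 : m • s 1 + b = (b.1 + r * ((m : ℝ) * δ), b.2) := by
    rw [Prod.ext_iff]; constructor <;> simp [hs, nsmul_eq_mul] <;> try ring
  have e2 : m • s 2 + b = (b.1, b.2 + (m : ℝ) * δ) := by
    rw [Prod.ext_iff]; constructor <;> simp [hs, nsmul_eq_mul] <;> try ring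
  have e3 : m • s 3 + b = (b.1 + r * ((m : ℝ) * δ), b.2 + (m : ℝ) * δ) := by
    rw [Prod.ext_iff]; constructor <;> simp [hs, nsmul_eq_mul] <;> try ring
  refine ⟨b.1, b.2, m, hm1, hmD, hb1, hb2, ?_, ?_, ?_, ?_, ?_⟩
  · have h := bound1 3
    rw [key 3, e3] at h
    exact h
  · have h := bound2 3
    rw [key 3, e3] at h
    exact h
  · have h1 : f (∑ i, s (l 1 i)) = f (∑ i, s (l 0 i)) := (hl 1).trans (hl 0).symm
    rw [key 1, key 0, e1, e0] at h1
    exact h1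
  · have h1 : f (∑ i, s (l 2 i)) = f (∑ i, s (l 0 i)) := (hl 2).trans (hl 0).symm
    rw [key 2, key 0, e2, e0] at h1
    exact h1
  · have h1 : f (∑ i, s (l 3 i)) = f (∑ i, s (l 0 i)) := (hl 3).trans (hl 0).symm
    rw [key 3, key 0, e3, e0] at h1
    exact h1

/-- Let `0 < r < 1`. For every 2-coloring of the closed unit square there are
uncountably many monochromatic rectangles with aspect ratio `r` contained in
the unit square. -/
theorem uncountably_many_monochromatic_rectangles_in_unit_square
    (r : ℝ) (hr0 : 0 < r) (hr1 : r < 1)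
    (χ : (Set.Icc ((0 : ℝ), (0 : ℝ)) (1, 1)) → Fin 2) :
    ¬ Set.Countable {p : ℝ × ℝ × ℝ |
      0 < p.2.2 ∧
      ∃ (h1 : ((p.1, p.2.1) : ℝ × ℝ) ∈ Set.Icc ((0 : ℝ), (0 : ℝ)) (1, 1))
        (h2 : ((p.1 + r * p.2.2, p.2.1) : ℝ × ℝ) ∈ Set.Icc ((0 : ℝ), (0 : ℝ)) (1, 1))
        (h3 : ((p.1, p.2.1 + p.2.2) : ℝ × ℝ) ∈ Set.Icc ((0 : ℝ), (0 : ℝ)) (1, 1))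
        (h4 : ((p.1 + r * p.2.2, p.2.1 + p.2.2) : ℝ × ℝ) ∈ Set.Icc ((0 : ℝ), (0 : ℝ)) (1, 1)),
        χ ⟨_, h2⟩ = χ ⟨_, h1⟩ ∧ χ ⟨_, h3⟩ = χ ⟨_, h1⟩ ∧ χ ⟨_, h4⟩ = χ ⟨_, h1⟩} := by
  intro hc
  set T := {p : ℝ × ℝ × ℝ |
      0 < p.2.2 ∧
      ∃ (h1 : ((p.1, p.2.1) : ℝ × ℝ) ∈ Set.Icc ((0 : ℝ), (0 : ℝ)) (1, 1))
        (h2 : ((p.1 + r * p.2.2, p.2.1) : ℝ × ℝ) ∈ Set.Icc ((0 : ℝ), (0 : ℝ)) (1, 1))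
        (h3 : ((p.1, p.2.1 + p.2.2) : ℝ × ℝ) ∈ Set.Icc ((0 : ℝ), (0 : ℝ)) (1, 1))
        (h4 : ((p.1 + r * p.2.2, p.2.1 + p.2.2) : ℝ × ℝ) ∈ Set.Icc ((0 : ℝ), (0 : ℝ)) (1, 1)),
        χ ⟨_, h2⟩ = χ ⟨_, h1⟩ ∧ χ ⟨_, h3⟩ = χ ⟨_, h1⟩ ∧ χ ⟨_, h4⟩ = χ ⟨_, h1⟩} with hT
  classical
  set f : ℝ × ℝ → Fin 2 := fun p => if h : p ∈ Set.Icc ((0 : ℝ), (0 : ℝ)) (1, 1) then χ ⟨p, h⟩ else 0 with hf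
  obtain ⟨D, hD0, hD⟩ := gallai_bounded_rect r hr0.le f
  have hDR : (0 : ℝ) < D := Nat.cast_pos.mpr hD0
  -- every δ ∈ (0, 1/D] lies in a countable set
  have hsub : Set.Ioc (0 : ℝ) (1 / D) ⊆ ⋃ p ∈ T, Set.range (fun m : ℕ => p.2.2 / (m : ℝ)) := by
    rintro δ ⟨hδ0, hδ1⟩
    obtain ⟨x, y, m, hm1, hmD, hx0, hy0, hxb, hyb, e2, e3, e4⟩ := hD δ hδ0.le
    have hDδ : (D : ℝ) * δ ≤ 1 := by
      rw [le_div_iff₀ hDR] at hδ1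
      rw [mul_comm]; exact hδ1
    have hxb' : x + r * ((m:ℝ) * δ) ≤ 1 := by
      refine hxb.trans ?_
      calc (D : ℝ) * (r * δ) = r * ((D:ℝ) * δ) := by ring
        _ ≤ 1 * 1 := mul_le_mul hr1.le hDδ (mul_nonneg hDR.le hδ0.le) zero_le_one
        _ = 1 := one_mul 1
    have hyb' : y + (m:ℝ) * δ ≤ 1 := hyb.trans hDδ
    have hmδ : 0 < (m:ℝ) * δ := by
      apply mul_pos _ hδ0
      exact_mod_cast hm1
    have hrm : 0 ≤ r * ((m:ℝ) * δ) := mul_nonneg hr0.le hmδ.le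
    set d : ℝ := (m : ℝ) * δ with hd
    have h1 : ((x, y) : ℝ × ℝ) ∈ Set.Icc ((0 : ℝ), (0 : ℝ)) (1, 1) := by
      refine Set.mem_Icc.mpr ⟨Prod.mk_le_mk.mpr ⟨by linarith, by linarith⟩,
        Prod.mk_le_mk.mpr ⟨by linarith, by linarith⟩⟩
    have h2 : ((x + r * d, y) : ℝ × ℝ) ∈ Set.Icc ((0 : ℝ), (0 : ℝ)) (1, 1) := by
      refine Set.mem_Icc.mpr ⟨Prod.mk_le_mk.mpr ⟨by linarith, by linarith⟩,
        Prod.mk_le_mk.mpr ⟨by linarith, by linarith⟩⟩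
    have h3 : ((x, y + d) : ℝ × ℝ) ∈ Set.Icc ((0 : ℝ), (0 : ℝ)) (1, 1) := by
      refine Set.mem_Icc.mpr ⟨Prod.mk_le_mk.mpr ⟨by linarith, by linarith⟩,
        Prod.mk_le_mk.mpr ⟨by linarith, by linarith⟩⟩
    have h4 : ((x + r * d, y + d) : ℝ × ℝ) ∈ Set.Icc ((0 : ℝ), (0 : ℝ)) (1, 1) := by
      refine Set.mem_Icc.mpr ⟨Prod.mk_le_mk.mpr ⟨by linarith, by linarith⟩,
        Prod.mk_le_mk.mpr ⟨by linarith, by linarith⟩⟩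
    have hfT : ((x, y, d) : ℝ × ℝ × ℝ) ∈ T := by
      refine ⟨hmδ, h1, h2, h3, h4, ?_, ?_, ?_⟩
      · simp only [hf] at e2
        rw [dif_pos h2, dif_pos h1] at e2
        exact e2
      · simp only [hf] at e3
        rw [dif_pos h3, dif_pos h1] at e3
        exact e3
      · simp only [hf] at e4
        rw [dif_pos h4, dif_pos h1] at e4
        exact e4
    refine Set.mem_biUnion hfT ⟨m, ?_⟩
    have hm0 : ((m:ℝ)) ≠ 0 := by positivity
    field_simp [hd]
    exact hd
  have hcount : (⋃ p ∈ T, Set.range (fun m : ℕ => p.2.2 / (m : ℝ))).Countable :=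
    hc.biUnion fun p _ => Set.countable_range _
  have : (Set.Ioc (0 : ℝ) (1 / D)).Countable := hcount.mono hsub
  have hcard := this.le_aleph0
  rw [Cardinal.mk_Ioc_real (by positivity : (0:ℝ) < 1 / D)] at hcard
  exact absurd hcard (not_le.mpr Cardinal.aleph0_lt_continuum)
end

section
/- For any finite coloring χ : ℝ² → Fin k of the Euclidean plane, there exist uncountably many real numbers r > 0 such that for each such r, there exist uncountably many monochromatic equilateral triangles with side length r that are homothetic to the unit equilateral triangle 𝒯 = {(0,0), (1,0), (1/2, √3/2)}; that is, the set of r > 0 for which the set {a ∈ ℝ² : the three points a, a + (r, 0), a + (r/2, r√3/2) all receive the same color under χ} is uncountable, is itself uncountable. -/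
/-- For any finite coloring of the plane, there are uncountably many `r > 0`
such that there are uncountably many monochromatic equilateral triangles of
side length `r` homothetic to the unit equilateral triangle
`{(0,0), (1,0), (1/2, √3/2)}`. -/
theorem uncountably_many_sides_uncountably_many_monochromatic_triangles
    (k : ℕ) (χ : ℝ × ℝ → Fin k) :
    ¬ Set.Countable {r : ℝ | 0 < r ∧
      ¬ Set.Countable {a : ℝ × ℝ |
        χ (a.1 + r, a.2) = χ a ∧
        χ (a.1 + r / 2, a.2 + r * Real.sqrt 3 / 2) = χ a}} := by
  intro hR
  set A : ℝ → Set (ℝ × ℝ) := fun r => {a : ℝ × ℝ |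
        χ (a.1 + r, a.2) = χ a ∧
        χ (a.1 + r / 2, a.2 + r * Real.sqrt 3 / 2) = χ a} with hAdef
  set R : Set ℝ := {r : ℝ | 0 < r ∧ ¬ Set.Countable (A r)} with hRdef
  -- the set of scales t such that some positive integer multiple of t lies in R is countable
  have hbad : Set.Countable {t : ℝ | ∃ n : ℕ, 0 < n ∧ t * n ∈ R} := by
    have hsub : {t : ℝ | ∃ n : ℕ, 0 < n ∧ t * n ∈ R} ⊆ ⋃ r ∈ R, ⋃ n : ℕ, {r / (n : ℝ)} := by
      rintro t ⟨n, hn, hmem⟩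
      refine Set.mem_biUnion hmem ?_
      refine Set.mem_iUnion.2 ⟨n, ?_⟩
      have hn' : (n : ℝ) ≠ 0 := Nat.cast_ne_zero.2 hn.ne'
      rw [Set.mem_singleton_iff, mul_div_assoc, div_self hn', mul_one]
    exact Set.Countable.mono hsub (hR.biUnion fun r _ => Set.countable_iUnion fun n => Set.countable_singleton _)
  -- pick a scale t > 0 avoiding all bad scales
  have hIoi : ¬ (Set.Ioi (0:ℝ)).Countable := by
    intro h
    have h2 := h.preimage Real.exp_injective
    rw [show Real.exp ⁻¹' Set.Ioi 0 = Set.univ from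
      Set.eq_univ_of_forall fun x => Real.exp_pos x] at h2
    exact Cardinal.not_countable_real h2
  have hns : ¬ (Set.Ioi (0:ℝ) ⊆ {t : ℝ | ∃ n : ℕ, 0 < n ∧ t * n ∈ R}) :=
    fun h => hIoi (hbad.mono h)
  obtain ⟨t, ht, htb⟩ := Set.not_subset.1 hns
  have ht : (0:ℝ) < t := ht
  -- all position sets at scale t are countable
  have hAc : ∀ n : ℕ, (A (t * (n + 1 : ℕ))).Countable := by
    intro n
    by_contra h
    exact htb ⟨n + 1, Nat.succ_pos n, by
      refine ⟨?_, h⟩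
      have : (0:ℝ) < ((n:ℝ) + 1) := by positivity
      push_cast
      nlinarith⟩
  -- the countable covering family
  set g : ℕ → ℚ × ℚ → Set (ℝ × ℝ) := fun n b =>
    (fun a : ℝ × ℝ => (a.1 - t * ((b.1 : ℝ) + (b.2 : ℝ) / 2),
        a.2 - t * ((b.2 : ℝ) * Real.sqrt 3 / 2))) '' A (t * (n + 1 : ℕ)) with hgdef
  have huniv : (Set.univ : Set (ℝ × ℝ)) ⊆ ⋃ (n : ℕ) (b : ℚ × ℚ), g n b := by
    intro w _
    -- Gallai's theorem on the countable monoid ℚ × ℚ with a sheared embedding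
    obtain ⟨m, hm, b, c0, hc⟩ := Combinatorics.exists_mono_homothetic_copy
      ({((0:ℚ), (0:ℚ)), (1, 0), (0, 1)} : Finset (ℚ × ℚ))
      (fun q : ℚ × ℚ =>
        χ (w.1 + t * ((q.1 : ℝ) + (q.2 : ℝ) / 2), w.2 + t * ((q.2 : ℝ) * Real.sqrt 3 / 2)))
    have h0 := hc ((0:ℚ), (0:ℚ)) (by simp)
    have h1 := hc ((1:ℚ), (0:ℚ)) (by simp)
    have h2 := hc ((0:ℚ), (1:ℚ)) (by simp)
    have e0 : m • ((0:ℚ), (0:ℚ)) + b = b := by simp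
    have e1 : m • ((1:ℚ), (0:ℚ)) + b = ((m : ℚ) + b.1, b.2) := by
      ext <;> simp [mul_comm]
    have e2 : m • ((0:ℚ), (1:ℚ)) + b = (b.1, (m : ℚ) + b.2) := by
      ext <;> simp [mul_comm]
    rw [e0] at h0
    rw [e1] at h1
    rw [e2] at h2
    set a : ℝ × ℝ := (w.1 + t * ((b.1 : ℝ) + (b.2 : ℝ) / 2),
        w.2 + t * ((b.2 : ℝ) * Real.sqrt 3 / 2)) with hadef
    obtain ⟨m', rfl⟩ : ∃ m', m = m' + 1 := ⟨m - 1, (Nat.succ_pred_eq_of_pos hm).symm⟩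
    set r : ℝ := t * ((m' : ℕ) + 1 : ℕ) with hrdef
    have ha : a ∈ A r := by
      constructor
      · -- base point and right vertex
        have key : (w.1 + t * (((((m' + 1 : ℕ) : ℚ) + b.1 : ℚ)) + (b.2 : ℝ) / 2),
            w.2 + t * ((b.2 : ℝ) * Real.sqrt 3 / 2)) = (a.1 + r, a.2) := by
          ext
          · show w.1 + t * ((((m' + 1 : ℕ) : ℚ) + b.1 : ℚ) + (b.2 : ℝ) / 2) = a.1 + r
            rw [hadef, hrdef]
            push_cast
            ring
          · rfl
        have := h1.trans h0.symm
        simpa only [key] using this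
      · have key : (w.1 + t * ((b.1 : ℝ) + ((((m' + 1 : ℕ) : ℚ) + b.2 : ℚ) : ℝ) / 2),
            w.2 + t * (((((m' + 1 : ℕ) : ℚ) + b.2 : ℚ) : ℝ) * Real.sqrt 3 / 2))
            = (a.1 + r / 2, a.2 + r * Real.sqrt 3 / 2) := by
          ext
          · show w.1 + t * ((b.1 : ℝ) + ((((m' + 1 : ℕ) : ℚ) + b.2 : ℚ) : ℝ) / 2)
              = a.1 + r / 2
            rw [hadef, hrdef]
            push_cast
            ring
          · show w.2 + t * (((((m' + 1 : ℕ) : ℚ) + b.2 : ℚ) : ℝ) * Real.sqrt 3 / 2)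
              = a.2 + r * Real.sqrt 3 / 2
            rw [hadef, hrdef]
            push_cast
            ring
        have := h2.trans h0.symm
        simpa only [key] using this
    refine Set.mem_iUnion.2 ⟨m', Set.mem_iUnion.2 ⟨b, ⟨a, ha, ?_⟩⟩⟩
    rw [hadef]
    ext <;> simp
  have hcnt : (Set.univ : Set (ℝ × ℝ)).Countable :=
    Set.Countable.mono huniv
      (Set.countable_iUnion fun n => Set.countable_iUnion fun b => (hAc n).image _)
  have : (Set.univ : Set ℝ).Countable := by
    have := hcnt.preimage (f := fun x : ℝ => (x, (0:ℝ)))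
      (fun x y hxy => (Prod.mk.injEq _ _ _ _ ▸ hxy : _ ∧ _).1)
    simpa using this
  exact Cardinal.not_countable_real this
end

section
/- For any 2-coloring χ : [0,1] × [0,1] → Fin 2 of the closed unit square, there exist uncountably many real numbers r ∈ (0, 1] such that for each such r, there exist uncountably many monochromatic equilateral triangles of side length r, homothetic to the unit equilateral triangle 𝒯 = {(0,0), (1,0), (1/2, √3/2)} and contained in the unit square; that is, the set of r ∈ (0, 1] for which the set {a ∈ ℝ² : the three points a, a + (r, 0), a + (r/2, r√3/2) all lie in [0,1] × [0,1] and all receive the same color under χ} is uncountable, is itself uncountable. -/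
set_option maxHeartbeats 4000000 in
set_option synthInstance.maxSize 1000000 in
set_option synthInstance.maxHeartbeats 40000000 in
set_option maxRecDepth 100000 in
private lemma triD : ∀ b00 b10 b20 b30 b40 b01 b11 b21 b31 b02 b12 b22 b03 b13 b04 : Bool, (b10 = b00 ∧ b01 = b00) ∨ (b20 = b00 ∧ b02 = b00) ∨ (b30 = b00 ∧ b03 = b00) ∨ (b40 = b00 ∧ b04 = b00) ∨ (b20 = b10 ∧ b11 = b10) ∨ (b30 = b10 ∧ b12 = b10) ∨ (b40 = b10 ∧ b13 = b10) ∨ (b30 = b20 ∧ b21 = b20) ∨ (b40 = b20 ∧ b22 = b20) ∨ (b40 = b30 ∧ b31 = b30) ∨ (b11 = b01 ∧ b02 = b01) ∨ (b21 = b01 ∧ b03 = b01) ∨ (b31 = b01 ∧ b04 = b01) ∨ (b21 = b11 ∧ b12 = b11) ∨ (b31 = b11 ∧ b13 = b11) ∨ (b31 = b21 ∧ b22 = b21) ∨ (b12 = b02 ∧ b03 = b02) ∨ (b22 = b02 ∧ b04 = b02) ∨ (b22 = b12 ∧ b13 = b12) ∨ (b13 = b03 ∧ b04 = b03) := by dec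ide

private lemma triGrid (f : ℕ → ℕ → Bool) :
    ∃ i j d : ℕ, 0 < d ∧ i + j + d ≤ 4 ∧ f (i+d) j = f i j ∧ f i (j+d) = f i j := by
  rcases triD (f 0 0) (f 1 0) (f 2 0) (f 3 0) (f 4 0) (f 0 1) (f 1 1) (f 2 1) (f 3 1) (f 0 2) (f 1 2) (f 2 2) (f 0 3) (f 1 3) (f 0 4) with ⟨h1,h2⟩|⟨h1,h2⟩|⟨h1,h2⟩|⟨h1,h2⟩|⟨h1,h2⟩|⟨h1,h2⟩|⟨h1,h2⟩|⟨h1,h2⟩|⟨h1,h2⟩|⟨h1,h2⟩|⟨h1,h2⟩|⟨h1,h2⟩|⟨h1,h2⟩|⟨h1,h2⟩|⟨h1,h2⟩|⟨h1,h2⟩|⟨h1,h2⟩|⟨h1,h2⟩|⟨h1,h2⟩|⟨h1,h2⟩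
  · exact ⟨0, 0, 1, by norm_num, by norm_num, h1, h2⟩
  · exact ⟨0, 0, 2, by norm_num, by norm_num, h1, h2⟩
  · exact ⟨0, 0, 3, by norm_num, by norm_num, h1, h2⟩
  · exact ⟨0, 0, 4, by norm_num, by norm_num, h1, h2⟩
  · exact ⟨1, 0, 1, by norm_num, by norm_num, h1, h2⟩
  · exact ⟨1, 0, 2, by norm_num, by norm_num, h1, h2⟩
  · exact ⟨1, 0, 3, by norm_num, by norm_num, h1, h2⟩
  · exact ⟨2, 0, 1, by norm_num, by norm_num, h1, h2⟩
  · exact ⟨2, 0, 2, by norm_num, by norm_num, h1, h2⟩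
  · exact ⟨3, 0, 1, by norm_num, by norm_num, h1, h2⟩
  · exact ⟨0, 1, 1, by norm_num, by norm_num, h1, h2⟩
  · exact ⟨0, 1, 2, by norm_num, by norm_num, h1, h2⟩
  · exact ⟨0, 1, 3, by norm_num, by norm_num, h1, h2⟩
  · exact ⟨1, 1, 1, by norm_num, by norm_num, h1, h2⟩
  · exact ⟨1, 1, 2, by norm_num, by norm_num, h1, h2⟩
  · exact ⟨2, 1, 1, by norm_num, by norm_num, h1, h2⟩
  · exact ⟨0, 2, 1, by norm_num, by norm_num, h1, h2⟩
  · exact ⟨0, 2, 2, by norm_num, by norm_num, h1, h2⟩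
  · exact ⟨1, 2, 1, by norm_num, by norm_num, h1, h2⟩
  · exact ⟨0, 3, 1, by norm_num, by norm_num, h1, h2⟩

private lemma fin2aux : ∀ x y : Fin 2, decide (x = 0) = decide (y = 0) → x = y := by decide

private lemma uncFiber {α β : Type*} [Countable β] {s : Set α} (hs : ¬ s.Countable) (F : α → β) :
    ∃ b, ¬ Set.Countable {a ∈ s | F a = b} := by
  by_contra h
  push_neg at h
  refine hs (Set.Countable.mono ?_ (Set.countable_iUnion h))
  intro a ha
  exact Set.mem_iUnion.2 ⟨F a, ha, rfl⟩

private lemma uncIoc {a b : ℝ} (h : a < b) : ¬ (Set.Ioc a b).Countable := by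
  intro hc
  have h1 := Cardinal.le_aleph0_iff_set_countable.2 hc
  rw [Cardinal.mk_Ioc_real h] at h1
  exact absurd h1 (not_le.2 Cardinal.aleph0_lt_continuum)

private lemma sqrt3_le_two : Real.sqrt 3 ≤ 2 := by
  nlinarith [Real.sq_sqrt (by norm_num : (0:ℝ) ≤ 3), Real.sqrt_nonneg 3]

private lemma memSq {u s : ℝ} (hu : u ∈ Set.Ioc (0:ℝ) (1/2)) (hs : s ∈ Set.Ioc (0:ℝ) (1/8))
    {i j : ℕ} (hij : i + j ≤ 4) :
    ((u + s*((i:ℝ) + (j:ℝ)/2), s*(j:ℝ)*(Real.sqrt 3/2)) : ℝ × ℝ)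
      ∈ Set.Icc ((0 : ℝ), (0 : ℝ)) (1, 1) := by
  obtain ⟨hu0, hu1⟩ := hu
  obtain ⟨hs0, hs1⟩ := hs
  have hij' : (i:ℝ) + (j:ℝ) ≤ 4 := by exact_mod_cast hij
  have hi0 : (0:ℝ) ≤ (i:ℝ) := Nat.cast_nonneg i
  have hj0 : (0:ℝ) ≤ (j:ℝ) := Nat.cast_nonneg j
  have hsq0 := Real.sqrt_nonneg 3
  have hsq2 := sqrt3_le_two
  have hA : 0 ≤ s*(j:ℝ) := mul_nonneg hs0.le hj0
  have hB : s*(j:ℝ) ≤ 1/2 := by nlinarith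
  have hC : s*(j:ℝ)*(Real.sqrt 3/2) ≤ (1/2)*(Real.sqrt 3/2) :=
    mul_le_mul_of_nonneg_right hB (by linarith)
  have hD : 0 ≤ s*(j:ℝ)*(Real.sqrt 3/2) := mul_nonneg hA (by linarith)
  have hE : s*((i:ℝ)+(j:ℝ)/2) ≤ (1/8)*4 :=
    mul_le_mul hs1 (by linarith) (by linarith) (by norm_num)
  have hF : 0 ≤ s*((i:ℝ)+(j:ℝ)/2) := mul_nonneg hs0.le (by linarith)
  refine Set.mem_Icc.2 ⟨Prod.mk_le_mk.2 ⟨?_, ?_⟩, Prod.mk_le_mk.2 ⟨?_, ?_⟩⟩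
  · linarith
  · linarith
  · linarith
  · linarith

def Mset (χ : (Set.Icc ((0 : ℝ), (0 : ℝ)) (1, 1)) → Fin 2) (r : ℝ) : Set (ℝ × ℝ) :=
  {a : ℝ × ℝ |
    ∃ (h1 : a ∈ Set.Icc ((0 : ℝ), (0 : ℝ)) (1, 1))
      (h2 : ((a.1 + r, a.2) : ℝ × ℝ) ∈ Set.Icc ((0 : ℝ), (0 : ℝ)) (1, 1))
      (h3 : ((a.1 + r / 2, a.2 + r * Real.sqrt 3 / 2) : ℝ × ℝ) ∈
        Set.Icc ((0 : ℝ), (0 : ℝ)) (1, 1)),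
      χ ⟨_, h2⟩ = χ ⟨_, h1⟩ ∧ χ ⟨_, h3⟩ = χ ⟨_, h1⟩}

private lemma step1 (χ : (Set.Icc ((0 : ℝ), (0 : ℝ)) (1, 1)) → Fin 2) {s : ℝ}
    (hs : s ∈ Set.Ioc (0:ℝ) (1/8)) :
    ∃ d : ℕ, 1 ≤ d ∧ d ≤ 4 ∧ ¬ (Mset χ ((d:ℝ)*s)).Countable := by
  have key : ∀ u : ℝ, ∃ z : ℕ × ℕ × ℕ, u ∈ Set.Ioc (0:ℝ) (1/2) →
      1 ≤ z.1 ∧ z.1 ≤ 4 ∧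
      ((u + s*((z.2.1:ℝ) + (z.2.2:ℝ)/2), s*(z.2.2:ℝ)*(Real.sqrt 3/2)) : ℝ × ℝ)
        ∈ Mset χ ((z.1:ℝ)*s) := by
    intro u
    by_cases hu : u ∈ Set.Ioc (0:ℝ) (1/2)
    · obtain ⟨i, j, d, hd, hle, h1, h2⟩ := triGrid
        (fun i j => if h : i + j ≤ 4
          then decide (χ ⟨_, memSq hu hs h⟩ = 0) else false)
      have e0 : i + j ≤ 4 := by omega
      have e1 : (i+d) + j ≤ 4 := by omega
      have e2 : i + (j+d) ≤ 4 := by omega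
      simp only [dif_pos e0, dif_pos e1, dif_pos e2] at h1 h2
      have c1 := fin2aux _ _ h1
      have c2 := fin2aux _ _ h2
      refine ⟨(d, i, j), fun _ => ⟨hd, by omega, ?_⟩⟩
      have E2 : ((u + s*((i:ℝ) + (j:ℝ)/2) + (d:ℝ)*s, s*(j:ℝ)*(Real.sqrt 3/2)) : ℝ × ℝ)
          = (u + s*(((i+d:ℕ):ℝ) + (j:ℝ)/2), s*(j:ℝ)*(Real.sqrt 3/2)) := by
        have hx : u + s*((i:ℝ) + (j:ℝ)/2) + (d:ℝ)*s
            = u + s*(((i+d:ℕ):ℝ) + (j:ℝ)/2) := by push_cast; ring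
        rw [hx]
      have E3 : ((u + s*((i:ℝ) + (j:ℝ)/2) + (d:ℝ)*s/2,
            s*(j:ℝ)*(Real.sqrt 3/2) + (d:ℝ)*s*Real.sqrt 3/2) : ℝ × ℝ)
          = (u + s*((i:ℝ) + ((j+d:ℕ):ℝ)/2), s*((j+d:ℕ):ℝ)*(Real.sqrt 3/2)) := by
        have hx : u + s*((i:ℝ) + (j:ℝ)/2) + (d:ℝ)*s/2
            = u + s*((i:ℝ) + ((j+d:ℕ):ℝ)/2) := by push_cast; ring
        have hy : s*(j:ℝ)*(Real.sqrt 3/2) + (d:ℝ)*s*Real.sqrt 3/2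
            = s*((j+d:ℕ):ℝ)*(Real.sqrt 3/2) := by push_cast; ring
        rw [hx, hy]
      exact ⟨memSq hu hs e0, E2.symm ▸ memSq hu hs e1, E3.symm ▸ memSq hu hs e2,
        (congrArg χ (Subtype.ext E2)).trans c1,
        (congrArg χ (Subtype.ext E3)).trans c2⟩
    · exact ⟨(1, 0, 0), fun h => absurd h hu⟩
  choose F hF using key
  obtain ⟨z, hz⟩ := uncFiber (uncIoc (by norm_num : (0:ℝ) < 1/2)) F
  obtain ⟨d, i, j⟩ := z
  have hne : {u ∈ Set.Ioc (0:ℝ) (1/2) | F u = (d, i, j)}.Nonempty :=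
    Set.nonempty_iff_ne_empty.2 (fun h => hz (h ▸ Set.countable_empty))
  obtain ⟨u₀, hu₀, hu₀'⟩ := hne
  have h₀ := hF u₀ hu₀
  rw [hu₀'] at h₀
  refine ⟨d, h₀.1, h₀.2.1, ?_⟩
  intro hc
  apply hz
  have hsub : {u ∈ Set.Ioc (0:ℝ) (1/2) | F u = (d, i, j)} ⊆
      (fun u : ℝ => ((u + s*((i:ℝ) + (j:ℝ)/2), s*(j:ℝ)*(Real.sqrt 3/2)) : ℝ × ℝ))
        ⁻¹' (Mset χ ((d:ℝ)*s)) := by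
    rintro u ⟨hu, hz'⟩
    have h := hF u hu
    rw [hz'] at h
    exact h.2.2
  exact Set.Countable.mono hsub
    (hc.preimage (fun a b hab => by simpa using congrArg Prod.fst hab))

/-- For any 2-coloring of the closed unit square, there are uncountably many
`r ∈ (0, 1]` such that there are uncountably many monochromatic equilateral
triangles of side length `r`, homothetic to the unit equilateral triangle
`{(0,0), (1,0), (1/2, √3/2)}` and contained in the unit square. -/
theorem uncountably_many_monochromatic_triangles_in_unit_square
    (χ : (Set.Icc ((0 : ℝ), (0 : ℝ)) (1, 1)) → Fin 2) :
    ¬ Set.Countable {r : ℝ | r ∈ Set.Ioc (0 : ℝ) 1 ∧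
      ¬ Set.Countable {a : ℝ × ℝ |
        ∃ (h1 : a ∈ Set.Icc ((0 : ℝ), (0 : ℝ)) (1, 1))
          (h2 : ((a.1 + r, a.2) : ℝ × ℝ) ∈ Set.Icc ((0 : ℝ), (0 : ℝ)) (1, 1))
          (h3 : ((a.1 + r / 2, a.2 + r * Real.sqrt 3 / 2) : ℝ × ℝ) ∈
            Set.Icc ((0 : ℝ), (0 : ℝ)) (1, 1)),
          χ ⟨_, h2⟩ = χ ⟨_, h1⟩ ∧ χ ⟨_, h3⟩ = χ ⟨_, h1⟩}} := by
  intro hG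
  have hG' : Set.Countable {r : ℝ | r ∈ Set.Ioc (0 : ℝ) 1 ∧ ¬ (Mset χ r).Countable} := hG
  have key : ∀ s : ℝ, ∃ d : ℕ, s ∈ Set.Ioc (0:ℝ) (1/8) →
      1 ≤ d ∧ d ≤ 4 ∧ ¬ (Mset χ ((d:ℝ)*s)).Countable := by
    intro s
    by_cases hs : s ∈ Set.Ioc (0:ℝ) (1/8)
    · obtain ⟨d, h1, h2, h3⟩ := step1 χ hs
      exact ⟨d, fun _ => ⟨h1, h2, h3⟩⟩
    · exact ⟨1, fun h => absurd h hs⟩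
  choose D hD using key
  obtain ⟨d, hd⟩ := uncFiber (uncIoc (by norm_num : (0:ℝ) < 1/8)) D
  have hne : {s ∈ Set.Ioc (0:ℝ) (1/8) | D s = d}.Nonempty :=
    Set.nonempty_iff_ne_empty.2 (fun h => hd (h ▸ Set.countable_empty))
  obtain ⟨s₀, hs₀, hs₀'⟩ := hne
  have h₀ := hD s₀ hs₀
  rw [hs₀'] at h₀
  have hd1 : 1 ≤ d := h₀.1
  apply hd
  have hsub : {s ∈ Set.Ioc (0:ℝ) (1/8) | D s = d} ⊆
      (fun s : ℝ => (d:ℝ)*s) ⁻¹' {r : ℝ | r ∈ Set.Ioc (0 : ℝ) 1 ∧ ¬ (Mset χ r).Countable} := by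
    rintro s ⟨hs, hDs⟩
    have h := hD s hs
    rw [hDs] at h
    have hd1' : (1:ℝ) ≤ (d:ℝ) := by exact_mod_cast h.1
    have hd4 : (d:ℝ) ≤ 4 := by exact_mod_cast h.2.1
    obtain ⟨hs0, hs1⟩ := hs
    have hA : 0 < (d:ℝ)*s := mul_pos (by linarith) hs0
    have hB : (d:ℝ)*s ≤ 1 := by nlinarith [mul_le_mul_of_nonneg_right hd4 hs0.le]
    exact ⟨⟨hA, hB⟩, h.2.2⟩
  have hdne : (d:ℝ) ≠ 0 := by
    have : (1:ℝ) ≤ (d:ℝ) := by exact_mod_cast hd1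
    linarith
  exact Set.Countable.mono hsub
    (hG'.preimage (fun a b hab => mul_left_cancel₀ hdne hab))
end

section
/- Let S be a finite subset of the integer lattice ℤ × ℤ (regarded as a subset of ℝ²). For any finite coloring χ : ℝ² → Fin k of the Euclidean plane, there exist uncountably many monochromatic homothetic copies of S; that is, the set of pairs (a, c) ∈ ℝ² × ℝ with c > 0 such that the set {a + c·s : s ∈ S} is monochromatic under χ is uncountable. -/
/-- For any finite `S ⊆ ℤ × ℤ` (viewed inside ℝ²) and any finite coloring of
the plane, the set of homothetic copies `{a + c • s : s ∈ S}` (with `c > 0`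
real) of `S` that are monochromatic is uncountable. -/
theorem uncountably_many_monochromatic_homothetic_copies
    (S : Finset (ℤ × ℤ)) (k : ℕ) (χ : ℝ × ℝ → Fin k) :
    ¬ Set.Countable {p : (ℝ × ℝ) × ℝ | 0 < p.2 ∧
      ∀ s ∈ S, ∀ t ∈ S,
        χ (p.1.1 + p.2 * (s.1 : ℝ), p.1.2 + p.2 * (s.2 : ℝ)) =
        χ (p.1.1 + p.2 * (t.1 : ℝ), p.1.2 + p.2 * (t.2 : ℝ))} := by
  intro hC
  set T := {p : (ℝ × ℝ) × ℝ | 0 < p.2 ∧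
      ∀ s ∈ S, ∀ t ∈ S,
        χ (p.1.1 + p.2 * (s.1 : ℝ), p.1.2 + p.2 * (s.2 : ℝ)) =
        χ (p.1.1 + p.2 * (t.1 : ℝ), p.1.2 + p.2 * (t.2 : ℝ))} with hT
  -- For each positive real r, apply Gallai's theorem to the coloring of ℤ×ℤ
  -- obtained by scaling by r.
  have key : ∀ r : {r : ℝ // 0 < r}, ∃ q : T × ℕ,
      0 < q.2 ∧ (q.1 : ((ℝ × ℝ) × ℝ)).2 = (r : ℝ) * q.2 := by
    intro ⟨r, hr⟩
    obtain ⟨n, hn, b, c, hc⟩ := Combinatorics.exists_mono_homothetic_copy S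
      (fun m : ℤ × ℤ => χ (r * (m.1 : ℝ), r * (m.2 : ℝ)))
    refine ⟨⟨⟨((r * b.1, r * b.2), r * n), ?_⟩, n⟩, hn, rfl⟩
    constructor
    · positivity
    · intro s hs t ht
      have e1 : ∀ u : ℤ × ℤ, (r * b.1 + r * ↑n * (u.1 : ℝ), r * b.2 + r * ↑n * (u.2 : ℝ))
          = (r * ((n : ℤ) * u.1 + b.1 : ℤ), r * ((n : ℤ) * u.2 + b.2 : ℤ)) := by
        intro u
        push_cast
        simp only [Prod.mk.injEq]
        constructor <;> ring
      rw [e1 s, e1 t]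
      have hns : ((n • s + b : ℤ × ℤ)).1 = (n : ℤ) * s.1 + b.1 := by
        simp [nsmul_eq_mul]
      have hns2 : ((n • s + b : ℤ × ℤ)).2 = (n : ℤ) * s.2 + b.2 := by
        simp [nsmul_eq_mul]
      have hnt : ((n • t + b : ℤ × ℤ)).1 = (n : ℤ) * t.1 + b.1 := by
        simp [nsmul_eq_mul]
      have hnt2 : ((n • t + b : ℤ × ℤ)).2 = (n : ℤ) * t.2 + b.2 := by
        simp [nsmul_eq_mul]
      rw [← hns, ← hns2, ← hnt, ← hnt2, hc s hs, hc t ht]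
  choose f hf1 hf2 using key
  -- f is injective since r can be recovered as p.2 / n
  have hinj : Function.Injective f := by
    intro r r' h
    have h2 := hf2 r
    have h2' := hf2 r'
    rw [h] at h2
    rw [h2'] at h2
    have hn : (0 : ℝ) < ((f r').2 : ℝ) := by exact_mod_cast hf1 r'
    ext
    exact mul_right_cancel₀ (ne_of_gt hn) h2.symm
  haveI : Countable T := hC.to_subtype
  haveI : Countable (T × ℕ) := inferInstance
  haveI : Countable {r : ℝ // 0 < r} := Function.Injective.countable hinj
  have hR : Countable ℝ := Function.Injective.countable
    (f := fun x : ℝ => (⟨Real.exp x, Real.exp_pos x⟩ : {r : ℝ // 0 < r}))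
    (fun x y h => Real.exp_injective (congrArg Subtype.val h))
  exact Uncountable.not_countable (α := ℝ) hR
end
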